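/- The Tukey depth of a point x with respect to a finite multiset S in ℝ^d equals the size of the smallest sub-multiset A ⊆ S such that x is not in the convex hull of S \ A. -/

import Mathlib

open scoped Classical

/-- The Tukey depth of `x` w.r.t. the multiset `S`. -/
noncomputable def td {d : ℕ} (S : Multiset (Fin d → ℝ)) (x : Fin d → ℝ) : ℕ :=
  sInf {n | ∃ a : Fin d → ℝ, a ≠ 0 ∧ ∃ w : ℝ,
    w ≤ ∑ j, a j * x j ∧ n = (S.filter fun y => w ≤ ∑ j, a j * y j).card}

lemma isLinearMap_dot {d : ℕ} (a : Fin d → ℝ) :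
    IsLinearMap ℝ (fun z : Fin d → ℝ => ∑ j, a j * z j) := by
  constructor
  · intro y z
    simp [mul_add, Finset.sum_add_distrib]
  · intro c z
    simp [Finset.mul_sum, smul_eq_mul, mul_left_comm]

lemma clm_eq_sum {d : ℕ} (f : (Fin d → ℝ) →L[ℝ] ℝ) (y : Fin d → ℝ) :
    f y = ∑ j, f (Pi.single j 1) * y j := by
  conv_lhs => rw [pi_eq_sum_univ y]
  rw [map_sum]
  refine Finset.sum_congr rfl fun j _ => ?_
  have h : (fun j' => if j = j' then (1:ℝ) else 0) = Pi.single j 1 := by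
    ext j'
    simp [Pi.single_apply, eq_comm]
  rw [map_smul, h, smul_eq_mul, mul_comm]

/-- The Tukey depth of a point `x` equals the size of the smallest sub-multiset `A ⊆ S`
such that `x` is not in the convex hull of `S \ A`. -/
theorem td_eq_min_removal {d : ℕ} (hd : 1 ≤ d) (S : Multiset (Fin d → ℝ)) (x : Fin d → ℝ) :
    td S x = sInf {k | ∃ A ≤ S, A.card = k ∧ x ∉ convexHull ℝ {y | y ∈ S - A}} := by
  set T1 : Set ℕ := {n | ∃ a : Fin d → ℝ, a ≠ 0 ∧ ∃ w : ℝ,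
    w ≤ ∑ j, a j * x j ∧ n = (S.filter fun y => w ≤ ∑ j, a j * y j).card} with hT1
  set T2 : Set ℕ := {k | ∃ A ≤ S, A.card = k ∧ x ∉ convexHull ℝ {y | y ∈ S - A}} with hT2
  have i0 : Fin d := ⟨0, hd⟩
  have ha0 : (Pi.single i0 1 : Fin d → ℝ) ≠ 0 := by
    intro h
    have := congrFun h i0
    simp at this
  have hT1ne : T1.Nonempty :=
    ⟨_, Pi.single i0 1, ha0, ∑ j, (Pi.single i0 1 : Fin d → ℝ) j * x j, le_refl _, rfl⟩
  have hT2ne : T2.Nonempty := by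
    refine ⟨S.card, S, le_refl S, rfl, ?_⟩
    simp
  -- every element of T1 is in T2
  have hsub : ∀ n ∈ T1, n ∈ T2 := by
    rintro n ⟨a, ha, w, hwx, hn⟩
    refine ⟨S.filter fun y => w ≤ ∑ j, a j * y j, Multiset.filter_le _ _, hn.symm, ?_⟩
    intro hx
    have hdiff : S - S.filter (fun y => w ≤ ∑ j, a j * y j)
        = S.filter (fun y => ¬ (w ≤ ∑ j, a j * y j)) := by
      refine (eq_tsub_of_add_eq ?_).symm
      rw [add_comm, Multiset.filter_add_not]
    have hsubset : {y | y ∈ S - S.filter (fun y => w ≤ ∑ j, a j * y j)}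
        ⊆ {z : Fin d → ℝ | ∑ j, a j * z j < w} := by
      intro y hy
      rw [Set.mem_setOf_eq, hdiff, Multiset.mem_filter] at hy
      exact not_le.mp hy.2
    have := convexHull_min hsubset (convex_halfSpace_lt (isLinearMap_dot a) w) hx
    exact absurd hwx (not_le.2 this)
  -- every element of T2 dominates an element of T1
  have hB : ∀ k ∈ T2, ∃ n ∈ T1, n ≤ k := by
    rintro k ⟨A, hAS, hAk, hx⟩
    by_cases h0 : S - A = 0
    · have hcard : S.card ≤ A.card := by
        have := Multiset.card_sub hAS
        rw [h0] at this
        simp at this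
        omega
      refine ⟨_, ⟨Pi.single i0 1, ha0, ∑ j, (Pi.single i0 1 : Fin d → ℝ) j * x j,
        le_refl _, rfl⟩, ?_⟩
      calc (S.filter fun y => (∑ j, (Pi.single i0 1 : Fin d → ℝ) j * x j)
              ≤ ∑ j, (Pi.single i0 1 : Fin d → ℝ) j * y j).card
          ≤ S.card := Multiset.card_le_card (Multiset.filter_le _ _)
        _ ≤ A.card := hcard
        _ = k := hAk
    · obtain ⟨y0, hy0⟩ := Multiset.exists_mem_of_ne_zero h0
      have hfin : {y | y ∈ S - A}.Finite := (S - A).finite_toSet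
      obtain ⟨f, u, hfu, hux⟩ := geometric_hahn_banach_closed_point
        (convex_convexHull ℝ _) (hfin.isClosed_convexHull (𝕜 := ℝ)) hx
      set a : Fin d → ℝ := fun j => f (Pi.single j 1) with hadef
      have hfa : ∀ y, f y = ∑ j, a j * y j := clm_eq_sum f
      have ha : a ≠ 0 := by
        intro h
        have h1 : f x = 0 := by rw [hfa]; simp [h]
        have h2 : f y0 = 0 := by rw [hfa]; simp [h]
        have h3 := hfu y0 (subset_convexHull ℝ _ hy0)
        rw [h1] at hux
        rw [h2] at h3
        linarith
      refine ⟨_, ⟨a, ha, u, ?_, rfl⟩, ?_⟩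
      · rw [← hfa]; exact hux.le
      · have hdecomp : S - A + A = S := tsub_add_cancel_of_le hAS
        have hnone : (S - A).filter (fun y => u ≤ ∑ j, a j * y j) = 0 := by
          rw [Multiset.filter_eq_nil]
          intro y hy
          have := hfu y (subset_convexHull ℝ _ hy)
          rw [hfa] at this
          exact not_le.2 this
        have hsplit : S.filter (fun y => u ≤ ∑ j, a j * y j)
            = (S - A).filter (fun y => u ≤ ∑ j, a j * y j)
              + A.filter (fun y => u ≤ ∑ j, a j * y j) := by
          rw [← Multiset.filter_add, hdecomp]
        rw [hsplit, hnone, zero_add]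
        calc (A.filter fun y => u ≤ ∑ j, a j * y j).card
            ≤ A.card := Multiset.card_le_card (Multiset.filter_le _ _)
          _ = k := hAk
  have htd : td S x = sInf T1 := rfl
  rw [htd]
  apply le_antisymm
  · obtain ⟨n, hn1, hnk⟩ := hB _ (Nat.sInf_mem hT2ne)
    exact le_trans (Nat.sInf_le hn1) hnk
  · exact Nat.sInf_le (hsub _ (Nat.sInf_mem hT1ne))
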